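/- For each integer n ≥ 2, let p_n denote the unique root of the equation p^((n+1)/(n−1)) + p = 1 in the interval [1/2, 1]. Then the sequence (p_n) converges to 1/2 as n tends to infinity. -/

import Mathlib

/-- If for each `n ≥ 2`, `p n` is the root of `x ^ ((n+1)/(n-1)) + x = 1` in
`[1/2, 1]`, then `p n → 1/2` as `n → ∞`. -/
theorem stmt_8 (p : ℕ → ℝ)
    (hp : ∀ n : ℕ, 2 ≤ n → p n ∈ Set.Icc (1/2 : ℝ) 1 ∧
      (p n) ^ (((n : ℝ) + 1) / ((n : ℝ) - 1)) + p n = 1) :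
    Filter.Tendsto p Filter.atTop (nhds (1/2 : ℝ)) := by
  set e : ℕ → ℝ := fun n => ((n : ℝ) + 1) / ((n : ℝ) - 1) with he
  -- exponent tends to 1
  have hsub : Filter.Tendsto (fun n : ℕ => (n : ℝ) - 1) Filter.atTop Filter.atTop :=
    Filter.tendsto_atTop_add_const_right _ (-1) tendsto_natCast_atTop_atTop
  have h0 : Filter.Tendsto (fun n : ℕ => 2 / ((n : ℝ) - 1)) Filter.atTop (nhds 0) := by
    simpa [div_eq_mul_inv] using hsub.inv_tendsto_atTop.const_mul (2 : ℝ)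
  have hetend : Filter.Tendsto e Filter.atTop (nhds 1) := by
    have : ∀ᶠ n : ℕ in Filter.atTop, 1 + 2 / ((n : ℝ) - 1) = e n := by
      filter_upwards [Filter.eventually_ge_atTop 2] with n hn
      have h1 : (1 : ℝ) ≤ (n : ℝ) := by exact_mod_cast Nat.one_le_of_lt hn
      have hne : (n : ℝ) - 1 ≠ 0 := by
        have : (2 : ℝ) ≤ (n : ℝ) := by exact_mod_cast hn
        nlinarith
      simp only [he]; rw [one_add_div hne]
      ring
    have := (tendsto_const_nhds.add h0).congr' this
    simpa using this
  -- (1/2)^(e n) → 1/2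
  have hhalf : Filter.Tendsto (fun n => ((1:ℝ)/2) ^ (e n)) Filter.atTop (nhds (1/2)) := by
    have hc : ContinuousAt (fun y : ℝ => ((1:ℝ)/2) ^ y) 1 :=
      Real.continuousAt_const_rpow (by norm_num)
    have := hc.tendsto.comp hetend
    simpa [Function.comp_def, Real.rpow_one] using this
  have hupper : Filter.Tendsto (fun n => 1 - ((1:ℝ)/2) ^ (e n)) Filter.atTop (nhds (1/2)) := by
    have := (tendsto_const_nhds (x := (1:ℝ))).sub hhalf
    norm_num at this ⊢
    exact this
  refine tendsto_of_tendsto_of_tendsto_of_le_of_le'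
    (tendsto_const_nhds (x := (1/2:ℝ))) hupper ?_ ?_
  · filter_upwards [Filter.eventually_ge_atTop 2] with n hn
    exact (hp n hn).1.1
  · filter_upwards [Filter.eventually_ge_atTop 2] with n hn
    obtain ⟨⟨hl, hu⟩, heq⟩ := hp n hn
    have hen : 0 ≤ e n := by
      have h2 : (2 : ℝ) ≤ (n : ℝ) := by exact_mod_cast hn
      apply div_nonneg <;> nlinarith
    have : ((1:ℝ)/2) ^ (e n) ≤ (p n) ^ (e n) :=
      Real.rpow_le_rpow (by norm_num) hl hen
    linarith
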